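/- Let j: D → H and k: E → H be faithful functors of finite groupoids, and M a Mackey 2-functor. If α: x → y is a morphism in M(H) with x a retract of j_*(w) for some w ∈ M(D), and α factors through an object of the form k_*(z), then α factors through an object induced from the isocomma groupoid (D/E over H), namely through (j ∘ pr₁)_*(u) for some u ∈ M(D/E over H). -/
import Mathlib

open CategoryTheory

namespace Stmt18

variable {MD ME MH MP : Type*} [Category MD] [Category ME] [Category MH] [Category MP]
  [Preadditive MD] [Preadditive ME] [Preadditive MH] [Preadditive MP]

theorem factors_through_isocomma_object
    (jind : MD ⥤ MH) (jres : MH ⥤ MD) (kind : ME ⥤ MH)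
    (p1ind : MP ⥤ MD) (p2res : ME ⥤ MP)
    [jind.Additive] [jres.Additive] [kind.Additive] [p1ind.Additive] [p2res.Additive]
    (adj : jind ⊣ jres)
    (mackey : kind ⋙ jres ≅ p2res ⋙ p1ind)
    {x y : MH} (α : x ⟶ y)
    (w : MD) (hx : ∃ (s : x ⟶ jind.obj w) (r : jind.obj w ⟶ x), s ≫ r = 𝟙 x)
    (z : ME) (hα : ∃ (g : x ⟶ kind.obj z) (h : kind.obj z ⟶ y), g ≫ h = α) :
    ∃ (u : MP) (g : x ⟶ jind.obj (p1ind.obj u)) (h : jind.obj (p1ind.obj u) ⟶ y),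
      g ≫ h = α := by
  obtain ⟨s, r, hsr⟩ := hx
  obtain ⟨g, h, hgh⟩ := hα
  refine ⟨p2res.obj z,
    s ≫ jind.map ((adj.homEquiv w (kind.obj z) (r ≫ g)) ≫ mackey.hom.app z),
    jind.map (mackey.inv.app z) ≫ adj.counit.app (kind.obj z) ≫ h, ?_⟩
  have key : jind.map (adj.homEquiv w (kind.obj z) (r ≫ g)) ≫
      adj.counit.app (kind.obj z) = r ≫ g := by
    simp [Adjunction.homEquiv_unit]
  calc _ = s ≫ jind.map (adj.homEquiv w (kind.obj z) (r ≫ g)) ≫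
        adj.counit.app (kind.obj z) ≫ h := by
        simp only [Functor.map_comp, Category.assoc]
        rw [← Category.assoc (jind.map (mackey.hom.app z)), ← jind.map_comp]
        simp
    _ = α := by
        rw [reassoc_of% key, ← Category.assoc s r, hsr, Category.id_comp, hgh]

end Stmt18
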